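/- Soundness of the modal tree encoding of universal propositional quantification: if a nonempty team T of a Kripke model M satisfies tree(V,p⃗,n) (the formula forcing the complete binary assignment tree over p₁,…,pₙ while storing the values of variables in V), then for every quantifier-free propositional formula ψ over V ∪ {p₁,…,pₙ}, M,T ⊨ □ⁿψ holds iff the propositional team {assignments over V realized in T} extended by all 2ⁿ valuations of p₁,…,pₙ satisfies ψ. -/

import Mathlib

/-- Kripke models. -/
structure Kripke where
  W : Type
  R : W → W → Prop
  π : ℕ → Set W

/-- Image team `R[T]`. -/
def img (M : Kripke) (T : Set M.W) : Set M.W := {w | ∃ w' ∈ T, M.R w' w}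

/-- Modal logic in negation normal form. -/
inductive MLForm : Type
  | pos : ℕ → MLForm
  | neg : ℕ → MLForm
  | conj : MLForm → MLForm → MLForm
  | disj : MLForm → MLForm → MLForm
  | dia : MLForm → MLForm
  | box : MLForm → MLForm

/-- Team semantics for modal logic. -/
def MLsat (M : Kripke) : Set M.W → MLForm → Prop
  | T, .pos p => T ⊆ M.π p
  | T, .neg p => T ∩ M.π p = ∅
  | T, .conj φ ψ => MLsat M T φ ∧ MLsat M T ψ
  | T, .disj φ ψ => ∃ T₁ T₂, T₁ ∪ T₂ = T ∧ MLsat M T₁ φ ∧ MLsat M T₂ ψ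
  | T, .dia φ => ∃ T', T' ⊆ img M T ∧ (∀ w ∈ T, ∃ w' ∈ T', M.R w w') ∧ MLsat M T' φ
  | T, .box φ => MLsat M (img M T) φ

/-- `□ⁿφ`. -/
def boxN : ℕ → MLForm → MLForm
  | 0, φ => φ
  | n + 1, φ => .box (boxN n φ)

/-- A valid formula. -/
def mlTop : MLForm := .disj (.pos 0) (.neg 0)

/-- Big conjunction of a list of formulae. -/
def bigConj : List MLForm → MLForm := fun l => l.foldr .conj mlTop

/-- `store(q,n) := (q ∧ □ⁿq) ∨ (¬q ∧ □ⁿ¬q)`. -/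
def store (q n : ℕ) : MLForm :=
  .disj (.conj (.pos q) (boxN n (.pos q))) (.conj (.neg q) (boxN n (.neg q)))

/-- `branch(p,n) := ◇p ∧ ◇¬p ∧ □ store(p,n)`. -/
def branch (p n : ℕ) : MLForm :=
  .conj (.dia (.pos p)) (.conj (.dia (.neg p)) (.box (store p n)))

/-- `tree(V,p⃗,n)` forces the complete binary assignment tree over `p₁,…,pₙ` while
storing the values of the variables in `V`. -/
def tree (V : List ℕ) (n : ℕ) (p : Fin n → ℕ) : MLForm :=
  bigConj ((V.map fun q => store q n) ++
    List.ofFn fun i : Fin n => boxN i (branch (p i) (n - (i + 1))))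

/-- Quantifier-free propositional formulae. -/
inductive PLForm : Type
  | pos : ℕ → PLForm
  | neg : ℕ → PLForm
  | conj : PLForm → PLForm → PLForm
  | disj : PLForm → PLForm → PLForm

/-- Classical single-assignment semantics. -/
def PLsatC (s : ℕ → Bool) : PLForm → Prop
  | .pos p => s p = true
  | .neg p => s p = false
  | .conj φ ψ => PLsatC s φ ∧ PLsatC s ψ
  | .disj φ ψ => PLsatC s φ ∨ PLsatC s ψ

/-- Variables of a propositional formula. -/
def varsOf : PLForm → List ℕ
  | .pos p => [p]
  | .neg p => [p]
  | .conj φ ψ => varsOf φ ++ varsOf ψ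
  | .disj φ ψ => varsOf φ ++ varsOf ψ

/-- Embedding of propositional formulae into modal logic. -/
def toML : PLForm → MLForm
  | .pos p => .pos p
  | .neg p => .neg p
  | .conj φ ψ => .conj (toML φ) (toML ψ)
  | .disj φ ψ => .disj (toML φ) (toML ψ)

open Classical in
/-- The propositional assignment realized at a world. -/
noncomputable def asg (M : Kripke) (w : M.W) : ℕ → Bool :=
  fun v => if w ∈ M.π v then true else false

/-- `n`-step reachability. -/
def RN (M : Kripke) : ℕ → M.W → M.W → Prop
  | 0, w, u => w = u
  | n + 1, w, u => ∃ v, M.R w v ∧ RN M n v u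

/-- Iterated image. -/
def imgN (M : Kripke) : ℕ → Set M.W → Set M.W
  | 0, T => T
  | n + 1, T => imgN M n (img M T)

lemma boxN_sat (M : Kripke) (φ : MLForm) :
    ∀ (n : ℕ) (T : Set M.W), MLsat M T (boxN n φ) ↔ MLsat M (imgN M n T) φ
  | 0, _ => Iff.rfl
  | n + 1, T => boxN_sat M φ n (img M T)

lemma mem_imgN (M : Kripke) :
    ∀ (n : ℕ) (T : Set M.W) (u : M.W), u ∈ imgN M n T ↔ ∃ w ∈ T, RN M n w u := by
  intro n
  induction n with
  | zero => intro T u; simp [imgN, RN, eq_comm]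
  | succ n ih =>
    intro T u
    constructor
    · intro hu
      obtain ⟨v, hv, hRN⟩ := (ih (img M T) u).mp hu
      obtain ⟨w, hw, hR⟩ := hv
      exact ⟨w, hw, v, hR, hRN⟩
    · rintro ⟨w, hw, v, hR, hRN⟩
      exact (ih (img M T) u).mpr ⟨v, ⟨w, hw, hR⟩, hRN⟩

lemma imgN_succ_eq (M : Kripke) :
    ∀ (n : ℕ) (T : Set M.W), imgN M n (img M T) = img M (imgN M n T) := by
  intro n
  induction n with
  | zero => intro T; rfl
  | succ n ih => intro T; exact ih (img M T)

lemma RN_snoc (M : Kripke) :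
    ∀ (n : ℕ) {w v v' : M.W}, RN M n w v → M.R v v' → RN M (n + 1) w v' := by
  intro n
  induction n with
  | zero => intro w v v' h hR; cases h; exact ⟨v', hR, rfl⟩
  | succ n ih =>
    rintro w v v' ⟨x, hx, hRN⟩ hR
    exact ⟨x, hx, ih hRN hR⟩

lemma asg_true (M : Kripke) (w : M.W) (v : ℕ) : asg M w v = true ↔ w ∈ M.π v := by
  simp [asg]

lemma asg_eq_of_iff {M : Kripke} {u w : M.W} {v : ℕ}
    (h : u ∈ M.π v ↔ w ∈ M.π v) : asg M u v = asg M w v := by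
  simp only [asg]
  split_ifs with h1 h2 h2 <;> simp_all

/-- Flatness of (the modal embedding of) propositional formulae. -/
lemma flat (M : Kripke) (φ : PLForm) :
    ∀ T : Set M.W, MLsat M T (toML φ) ↔ ∀ w ∈ T, PLsatC (asg M w) φ := by
  induction φ with
  | pos q =>
    intro T
    simp only [toML, MLsat, PLsatC, asg_true]
    exact ⟨fun h w hw => h hw, fun h w hw => h w hw⟩
  | neg q =>
    intro T
    simp only [toML, MLsat, PLsatC]
    rw [Set.eq_empty_iff_forall_notMem]
    constructor
    · intro h w hw
      have := h w
      simp only [Set.mem_inter_iff] at this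
      simp [asg]
      tauto
    · intro h w
      simp only [Set.mem_inter_iff, not_and]
      intro hw
      have := h w hw
      simp [asg] at this
      exact this
  | conj φ₁ φ₂ ih1 ih2 =>
    intro T
    simp only [toML, MLsat, PLsatC, ih1, ih2]
    constructor
    · rintro ⟨h1, h2⟩ w hw; exact ⟨h1 w hw, h2 w hw⟩
    · intro h; exact ⟨fun w hw => (h w hw).1, fun w hw => (h w hw).2⟩
  | disj φ₁ φ₂ ih1 ih2 =>
    intro T
    constructor
    · rintro ⟨T₁, T₂, hU, h1, h2⟩ w hw
      rw [← hU] at hw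
      rcases hw with hw | hw
      · exact Or.inl ((ih1 T₁).mp h1 w hw)
      · exact Or.inr ((ih2 T₂).mp h2 w hw)
    · intro h
      refine ⟨{w ∈ T | PLsatC (asg M w) φ₁}, {w ∈ T | PLsatC (asg M w) φ₂}, ?_, ?_, ?_⟩
      · ext w
        simp only [Set.mem_union, Set.mem_setOf_eq]
        constructor
        · rintro (⟨hw, _⟩ | ⟨hw, _⟩) <;> exact hw
        · intro hw
          rcases h w hw with h' | h'
          · exact Or.inl ⟨hw, h'⟩
          · exact Or.inr ⟨hw, h'⟩
      · exact (ih1 _).mpr fun w hw => hw.2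
      · exact (ih2 _).mpr fun w hw => hw.2

lemma plsat_congr (s t : ℕ → Bool) :
    ∀ ψ : PLForm, (∀ v ∈ varsOf ψ, s v = t v) → (PLsatC s ψ ↔ PLsatC t ψ) := by
  intro ψ
  induction ψ with
  | pos q => intro h; simp [PLsatC, h q (by simp [varsOf])]
  | neg q => intro h; simp [PLsatC, h q (by simp [varsOf])]
  | conj φ₁ φ₂ ih1 ih2 =>
    intro h
    simp only [PLsatC]
    rw [ih1 fun v hv => h v (by simp [varsOf, hv]),
      ih2 fun v hv => h v (by simp [varsOf, hv])]
  | disj φ₁ φ₂ ih1 ih2 =>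
    intro h
    simp only [PLsatC]
    rw [ih1 fun v hv => h v (by simp [varsOf, hv]),
      ih2 fun v hv => h v (by simp [varsOf, hv])]

lemma bigConj_mem {M : Kripke} {T : Set M.W} :
    ∀ {L : List MLForm}, MLsat M T (bigConj L) → ∀ φ ∈ L, MLsat M T φ := by
  intro L
  induction L with
  | nil => intro _ φ hφ; simp at hφ
  | cons ψ L ih =>
    rintro ⟨h1, h2⟩ φ hφ
    rcases List.mem_cons.mp hφ with rfl | hφ
    · exact h1
    · exact ih h2 φ hφ

/-- `store q n` forces the value of `q` to be preserved along `n` steps. -/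
lemma store_pres {M : Kripke} {T : Set M.W} {q n : ℕ}
    (h : MLsat M T (store q n)) :
    ∀ w ∈ T, ∀ u, RN M n w u → (u ∈ M.π q ↔ w ∈ M.π q) := by
  obtain ⟨T₁, T₂, hU, ⟨h1a, h1b⟩, ⟨h2a, h2b⟩⟩ := h
  have h1b' : imgN M n T₁ ⊆ M.π q := (boxN_sat M _ n T₁).mp h1b
  have h2b' : imgN M n T₂ ∩ M.π q = ∅ := (boxN_sat M _ n T₂).mp h2b
  intro w hw u hRN
  rw [← hU] at hw
  rcases hw with hw | hw
  · have hu : u ∈ imgN M n T₁ := (mem_imgN M n T₁ u).mpr ⟨w, hw, hRN⟩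
    have hwq : w ∈ M.π q := h1a hw
    simp [h1b' hu, hwq]
  · have hu : u ∈ imgN M n T₂ := (mem_imgN M n T₂ u).mpr ⟨w, hw, hRN⟩
    have hwq : w ∉ M.π q := fun hc =>
      Set.eq_empty_iff_forall_notMem.mp (h2a : T₂ ∩ M.π q = ∅) w ⟨hw, hc⟩
    have huq : u ∉ M.π q := fun hc => by
      rw [Set.eq_empty_iff_forall_notMem] at h2b'
      exact h2b' u ⟨hu, hc⟩
    simp [hwq, huq]

/-- Chain construction along the branching formulae. -/
lemma chain (M : Kripke) (T : Set M.W) (n : ℕ) (p : Fin n → ℕ)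
    (hbranch : ∀ i : Fin n, MLsat M (imgN M i T) (branch (p i) (n - (i + 1))))
    (w : M.W) (hw : w ∈ T) (b : Fin n → Bool) :
    ∃ u, RN M n w u ∧ ∀ i : Fin n, (u ∈ M.π (p i) ↔ b i = true) := by
  suffices h : ∀ k, k ≤ n → ∃ v, RN M k w v ∧ v ∈ imgN M k T ∧
      ∀ i : Fin n, (i : ℕ) < k → ∀ u, RN M (n - k) v u →
        (u ∈ M.π (p i) ↔ b i = true) by
    obtain ⟨v, hv1, _, hv3⟩ := h n le_rfl
    refine ⟨v, hv1, fun i => hv3 i i.isLt v ?_⟩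
    rw [Nat.sub_self]
    exact rfl
  intro k
  induction k with
  | zero =>
    intro _
    exact ⟨w, rfl, hw, fun i hi => absurd hi (Nat.not_lt_zero _)⟩
  | succ k ih =>
    intro hk
    obtain ⟨v, hv1, hv2, hv3⟩ := ih (Nat.le_of_succ_le hk)
    have hkn : k < n := hk
    set i₀ : Fin n := ⟨k, hkn⟩
    obtain ⟨hd1, hd2, hst⟩ := hbranch i₀
    have hst' : MLsat M (imgN M (k + 1) T) (store (p i₀) (n - (k + 1))) := by
      rw [show imgN M (k + 1) T = imgN M k (img M T) from rfl, imgN_succ_eq]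
      exact hst
    -- choose the successor according to b i₀
    have hsucc : ∃ v', M.R v v' ∧ v' ∈ img M (imgN M k T) ∧
        (v' ∈ M.π (p i₀) ↔ b i₀ = true) := by
      cases hb : b i₀ with
      | true =>
        obtain ⟨T', hT'sub, hT'tot, hT'pos⟩ := hd1
        obtain ⟨v', hv', hR⟩ := hT'tot v hv2
        exact ⟨v', hR, hT'sub hv', by simp [hT'pos hv']⟩
      | false =>
        obtain ⟨T', hT'sub, hT'tot, hT'neg⟩ := hd2
        obtain ⟨v', hv', hR⟩ := hT'tot v hv2
        refine ⟨v', hR, hT'sub hv', ?_⟩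
        have : v' ∉ M.π (p i₀) := fun hc =>
          Set.eq_empty_iff_forall_notMem.mp (hT'neg : T' ∩ M.π (p i₀) = ∅) v' ⟨hv', hc⟩
        simp [this]
    obtain ⟨v', hR, hv'img, hv'val⟩ := hsucc
    have hv'mem : v' ∈ imgN M (k + 1) T := by
      rw [show imgN M (k + 1) T = imgN M k (img M T) from rfl, imgN_succ_eq]
      exact hv'img
    refine ⟨v', RN_snoc M k hv1 hR, hv'mem, ?_⟩
    intro i hi u hu
    rcases Nat.lt_succ_iff_lt_or_eq.mp hi with hik | hik
    · -- i < k : use induction hypothesis, prepending the step v → v'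
      have : RN M ((n - (k + 1)) + 1) v u := ⟨v', hR, hu⟩
      rw [show (n - (k + 1)) + 1 = n - k by omega] at this
      exact hv3 i hik u this
    · -- i = k : use the store at level k + 1
      have hii : i = i₀ := Fin.ext hik
      subst hii
      rw [store_pres hst' v' hv'mem u hu]
      exact hv'val

/-- Soundness of the modal tree encoding of universal propositional quantification:
if a nonempty team satisfies `tree(V,p⃗,n)`, then for every quantifier-free propositional
`ψ` over `V ∪ {p₁,…,pₙ}`, `M,T ⊨ □ⁿψ` iff the propositional team of assignments realized
in `T`, duplicated with all `2ⁿ` valuations of `p₁,…,pₙ`, satisfies `ψ`. -/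
theorem tree_encoding_sound (M : Kripke) (T : Set M.W) (hT : T.Nonempty)
    (n : ℕ) (p : Fin n → ℕ) (V : List ℕ)
    (hpV : ∀ i, p i ∉ V) (hpInj : Function.Injective p)
    (htree : MLsat M T (tree V n p))
    (ψ : PLForm) (hvars : ∀ v ∈ varsOf ψ, v ∈ V ∨ ∃ i, v = p i) :
    MLsat M T (boxN n (toML ψ)) ↔
      ∀ s : ℕ → Bool, (∃ w ∈ T, ∀ v ∈ V, s v = asg M w v) → PLsatC s ψ := by
  have hmem := bigConj_mem htree
  have hstoreV : ∀ q ∈ V, MLsat M T (store q n) := fun q hq =>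
    hmem _ (List.mem_append_left _ (List.mem_map_of_mem hq))
  have hbranch : ∀ i : Fin n, MLsat M (imgN M i T) (branch (p i) (n - (i + 1))) := by
    intro i
    have h := hmem (boxN i (branch (p i) (n - (i + 1))))
      (List.mem_append_right _ (List.mem_ofFn.mpr ⟨i, rfl⟩))
    exact (boxN_sat M _ i T).mp h
  rw [boxN_sat, flat]
  constructor
  · rintro h s ⟨w, hwT, hs⟩
    obtain ⟨u, hRN, hu⟩ := chain M T n p hbranch w hwT fun i => s (p i)
    have hu' : u ∈ imgN M n T := (mem_imgN M n T u).mpr ⟨w, hwT, hRN⟩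
    refine (plsat_congr (asg M u) s ψ ?_).mp (h u hu')
    intro v hv
    rcases hvars v hv with hvV | ⟨i, rfl⟩
    · rw [hs v hvV]
      exact asg_eq_of_iff (store_pres (hstoreV v hvV) w hwT u hRN)
    · have h2 := hu i
      cases h3 : s (p i) with
      | true => rw [asg_true]; exact h2.mpr h3
      | false =>
        rw [h3] at h2
        simp only [asg]
        simp at h2
        simp [h2]
  · intro h u hu
    obtain ⟨w, hwT, hRN⟩ := (mem_imgN M n T u).mp hu
    exact h (asg M u) ⟨w, hwT, fun v hv =>
      asg_eq_of_iff (store_pres (hstoreV v hv) w hwT u hRN)⟩
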